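/- (Asymptotic limit of the one-shot work quantities: convergence to the free-energy difference) Fix an inverse temperature β > 0, a strictly positive probability vector g on Fin d, a probability vector r on Fin d, and ε ∈ (0,1). For each n, consider the system of n copies, with state r^{⊗n} and equilibrium state g^{⊗n} on (Fin d)^n. Then lim_{n→∞} (1/n) · W_gain^ε(r^{⊗n}) = lim_{n→∞} (1/n) · W_cost^ε(r^{⊗n}) = (1/β) · D(r ‖ g). -/

import Mathlib

open Finset Real Filter

/-- A probability vector on a finite index set. -/
def IsProbVec {ι : Type*} [Fintype ι] (r : ι → ℝ) : Prop :=
  (∀ i, 0 ≤ r i) ∧ ∑ i, r i = 1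

/-- A column-stochastic matrix: nonnegative entries, each column sums to 1. -/
def ColStochastic {ι κ : Type*} [Fintype ι] [Fintype κ] (M : Matrix κ ι ℝ) : Prop :=
  (∀ i j, 0 ≤ M i j) ∧ ∀ j, ∑ i, M i j = 1

/-- Tensor product of vectors. -/
def tens {ι κ : Type*} (r : ι → ℝ) (s : κ → ℝ) : ι × κ → ℝ := fun p => r p.1 * s p.2

/-- n-fold tensor power of a vector on `Fin d`. -/
def tensPow {d : ℕ} (r : Fin d → ℝ) (n : ℕ) : (Fin n → Fin d) → ℝ :=
  fun f => ∏ k, r (f k)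

/-- Relative entropy `D(r ‖ g)` (natural logarithm; `0 * log 0 = 0` holds by convention). -/
noncomputable def relEnt {ι : Type*} [Fintype ι] (r g : ι → ℝ) : ℝ :=
  ∑ i, r i * (Real.log (r i) - Real.log (g i))

/-- Optimal type-II error in hypothesis testing between `r` and `g`. -/
noncomputable def bEps {ι : Type*} [Fintype ι] (ε : ℝ) (r g : ι → ℝ) : ℝ :=
  sInf {y | ∃ Q : ι → ℝ, (∀ i, 0 ≤ Q i ∧ Q i ≤ 1) ∧ 1 - ε ≤ ∑ i, Q i * r i ∧
    y = ∑ i, Q i * g i}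

/-- Hypothesis-testing relative entropy. -/
noncomputable def DH {ι : Type*} [Fintype ι] (ε : ℝ) (r g : ι → ℝ) : ℝ :=
  - Real.log (bEps ε r g)

/-- Partial sums of `v` along the ordering `e`. -/
noncomputable def cumul {ι : Type*} [Fintype ι] (v : ι → ℝ)
    (e : Fin (Fintype.card ι) ≃ ι) (m : ℕ) : ℝ :=
  ∑ α ∈ Finset.univ.filter (fun α : Fin (Fintype.card ι) => (α : ℕ) < m), v (e α)

/-- `L` is the rescaled Lorenz curve of `r` relative to `g`: indices are ordered so that the
ratios `r/g` are nonincreasing, and `L` linearly interpolates the cumulative points. -/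
def IsLorenzCurveOf {ι : Type*} [Fintype ι] (r g : ι → ℝ) (L : ℝ → ℝ) : Prop :=
  ∃ e : Fin (Fintype.card ι) ≃ ι,
    (∀ a b : Fin (Fintype.card ι), a ≤ b → r (e b) / g (e b) ≤ r (e a) / g (e a)) ∧
    ∀ m : Fin (Fintype.card ι), ∀ x : ℝ,
      cumul g e (m : ℕ) ≤ x → x ≤ cumul g e ((m : ℕ) + 1) →
      L x = cumul r e (m : ℕ) + (x - cumul g e (m : ℕ)) * (r (e m) / g (e m))

/-- Gibbs state of a two-level battery with gap `W` at inverse temperature `β`. -/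
noncomputable def gibbsBit (β W : ℝ) : Fin 2 → ℝ :=
  fun k => (1 / (1 + Real.exp (-β * W))) * (if k = 0 then 1 else Real.exp (-β * W))

/-- Battery ground state `(1,0)`. -/
def groundBit : Fin 2 → ℝ := fun k => if k = 0 then 1 else 0

/-- Battery excited state `(0,1)`. -/
def excitedBit : Fin 2 → ℝ := fun k => if k = 0 then 0 else 1

/-- `W` units of work are ε-extractable from `r` relative to the equilibrium state `g`. -/
def ExtractableWork {ι : Type*} [Fintype ι] (β : ℝ) (g r : ι → ℝ) (ε W : ℝ) : Prop :=
  0 ≤ W ∧ ∃ M : Matrix (ι × Fin 2) (ι × Fin 2) ℝ, ColStochastic M ∧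
    M.mulVec (tens g (gibbsBit β W)) = tens g (gibbsBit β W) ∧
    (1/2) * ∑ k, |(∑ i, M.mulVec (tens r groundBit) (i, k)) - excitedBit k| ≤ ε

/-- One-shot ε-work yield. -/
noncomputable def Wgain {ι : Type*} [Fintype ι] (β : ℝ) (g r : ι → ℝ) (ε : ℝ) : ℝ :=
  sSup {W | ExtractableWork β g r ε W}

/-- `W` units of work ε-suffice to create `r` relative to the equilibrium state `g`. -/
def FormationWork {ι : Type*} [Fintype ι] (β : ℝ) (g r : ι → ℝ) (ε W : ℝ) : Prop :=
  0 ≤ W ∧ ∃ M : Matrix (ι × Fin 2) (ι × Fin 2) ℝ, ∃ rt : ι → ℝ, ColStochastic M ∧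
    M.mulVec (tens g (gibbsBit β W)) = tens g (gibbsBit β W) ∧
    IsProbVec rt ∧ (1/2) * ∑ i, |rt i - r i| ≤ ε ∧
    M.mulVec (tens g excitedBit) = tens rt groundBit

/-- One-shot ε-work cost. -/
noncomputable def Wcost {ι : Type*} [Fintype ι] (β : ℝ) (g r : ι → ℝ) (ε : ℝ) : ℝ :=
  sInf {W | FormationWork β g r ε W}

-- ===== auxiliary lemmas =====
-- basic lemmas
lemma probVec_le_one {ι : Type*} [Fintype ι] {p : ι → ℝ} (hp : IsProbVec p) (i : ι) :
    p i ≤ 1 := by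
  rw [← hp.2]
  exact Finset.single_le_sum (fun j _ => hp.1 j) (mem_univ i)

lemma sum_pi_prod {d n : ℕ} (u : Fin n → Fin d → ℝ) :
    ∑ x : Fin n → Fin d, ∏ k, u k (x k) = ∏ k, ∑ i, u k i := by
  rw [Finset.prod_univ_sum, ← Fintype.piFinset_univ]

lemma tensPow_prob {d : ℕ} {r : Fin d → ℝ} (hr : IsProbVec r) (n : ℕ) :
    IsProbVec (tensPow r n) := by
  constructor
  · intro x; exact Finset.prod_nonneg fun k _ => hr.1 _
  · show ∑ x : Fin n → Fin d, ∏ k, r (x k) = 1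
    rw [sum_pi_prod (fun _ i => r i)]
    simp [hr.2]

lemma tensPow_pos {d : ℕ} {g : Fin d → ℝ} (hg : ∀ i, 0 < g i) (n : ℕ)
    (x : Fin n → Fin d) : 0 < tensPow g n x :=
  Finset.prod_pos fun k _ => hg _

lemma colStoch_sum {ι : Type*} [Fintype ι] {M : Matrix ι ι ℝ} (hM : ColStochastic M)
    (v : ι → ℝ) : ∑ o, M.mulVec v o = ∑ i, v i := by
  simp only [Matrix.mulVec, dotProduct]
  rw [Finset.sum_comm]
  simp only [← Finset.sum_mul, hM.2, one_mul]

lemma tv_event {ι : Type*} [Fintype ι] {u v : ι → ℝ} (h : ∑ i, u i = ∑ i, v i)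
    (A : Finset ι) : ∑ i ∈ A, (u i - v i) ≤ (1/2) * ∑ i, |u i - v i| := by
  classical
  have hsub : A ⊆ univ := Finset.subset_univ A
  have hsplit : ∑ i ∈ univ \ A, (u i - v i) + ∑ i ∈ A, (u i - v i) = 0 := by
    rw [Finset.sum_sdiff hsub]
    simp [Finset.sum_sub_distrib, h]
  have h1 : ∑ i ∈ A, (u i - v i) ≤ ∑ i ∈ A, |u i - v i| :=
    Finset.sum_le_sum fun i _ => le_abs_self _
  have h2 : -∑ i ∈ univ \ A, (u i - v i) ≤ ∑ i ∈ univ \ A, |u i - v i| := by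
    rw [← Finset.sum_neg_distrib]
    exact Finset.sum_le_sum fun i _ => neg_le_abs _
  have h3 : ∑ i ∈ univ \ A, |u i - v i| + ∑ i ∈ A, |u i - v i| = ∑ i, |u i - v i| :=
    Finset.sum_sdiff hsub
  nlinarith [hsplit, h1, h2, h3]

lemma relEnt_nonneg {ι : Type*} [Fintype ι] {r g : ι → ℝ} (hr : IsProbVec r)
    (hg : IsProbVec g) (hgpos : ∀ i, 0 < g i) : 0 ≤ relEnt r g := by
  have key : ∀ i, r i - g i ≤ r i * (Real.log (r i) - Real.log (g i)) := by
    intro i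
    rcases eq_or_lt_of_le (hr.1 i) with h0 | h0
    · simp [← h0]; linarith [(hgpos i).le]
    · have hlog : Real.log (g i / r i) ≤ g i / r i - 1 :=
        Real.log_le_sub_one_of_pos (div_pos (hgpos i) h0)
      rw [Real.log_div (hgpos i).ne' h0.ne'] at hlog
      have h2 := mul_le_mul_of_nonneg_left hlog h0.le
      have h3 : r i * (g i / r i) = g i := by field_simp
      nlinarith
  calc (0:ℝ) = ∑ i, (r i - g i) := by rw [Finset.sum_sub_distrib, hr.2, hg.2]; ring
  _ ≤ _ := Finset.sum_le_sum fun i _ => key i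

-- gibbsBit facts
lemma gibbs0 (β W : ℝ) : gibbsBit β W 0 = 1 / (1 + Real.exp (-β * W)) := by
  simp [gibbsBit]
lemma gibbs1 (β W : ℝ) :
    gibbsBit β W 1 = (1 / (1 + Real.exp (-β * W))) * Real.exp (-β * W) := by
  simp [gibbsBit]
lemma gibbs0_pos (β W : ℝ) : 0 < gibbsBit β W 0 := by
  rw [gibbs0]; positivity
lemma gibbs1_eq (β W : ℝ) : gibbsBit β W 1 = Real.exp (-β * W) * gibbsBit β W 0 := by
  rw [gibbs0, gibbs1]; ring
lemma gibbs1_nonneg (β W : ℝ) : 0 ≤ gibbsBit β W 1 := by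
  rw [gibbs1]; positivity

lemma fin2_sum (f : Fin 2 → ℝ) : ∑ k, f k = f 0 + f 1 := by
  simp [Fin.sum_univ_two]

/-- Converse for extraction: an extractable `W` yields a feasible test with value ≤ e^{-βW}. -/
lemma extract_converse {ι : Type*} [Fintype ι] {β : ℝ} {h p : ι → ℝ}
    (hh : IsProbVec h) (hp : IsProbVec p) {ε W : ℝ}
    (hE : ExtractableWork β h p ε W) :
    ∃ Q : ι → ℝ, (∀ i, 0 ≤ Q i ∧ Q i ≤ 1) ∧ 1 - ε ≤ ∑ i, Q i * p i ∧
      ∑ i, Q i * h i ≤ Real.exp (-β * W) := by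
  obtain ⟨hW, M, hM, hfix, hbat⟩ := hE
  set γ := gibbsBit β W with hγ
  classical
  set Q : ι → ℝ := fun i => ∑ j, M (j, 1) (i, 0) with hQ
  have hQ01 : ∀ i, 0 ≤ Q i ∧ Q i ≤ 1 := by
    intro i
    constructor
    · exact Finset.sum_nonneg fun j _ => hM.1 _ _
    · calc Q i = ∑ j, M (j, 1) (i, 0) := rfl
      _ ≤ ∑ j, (M (j, 0) (i, 0) + M (j, 1) (i, 0)) := by
          apply Finset.sum_le_sum; intro j _; linarith [hM.1 (j, (0:Fin 2)) (i, (0:Fin 2))]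
      _ = ∑ jl : ι × Fin 2, M jl (i, 0) := by
          rw [Fintype.sum_prod_type]
          apply Finset.sum_congr rfl; intro j _; rw [fin2_sum]
      _ = 1 := hM.2 _
  -- battery marginal
  have hb1 : (∑ j, M.mulVec (tens p groundBit) (j, 1)) = ∑ i, Q i * p i := by
    simp only [Matrix.mulVec, dotProduct, Fintype.sum_prod_type]
    rw [Finset.sum_comm]
    apply Finset.sum_congr rfl; intro i _
    rw [Finset.sum_comm]
    simp [fin2_sum, tens, groundBit, hQ, Finset.sum_mul, Finset.mul_sum, mul_comm]
  have hsumpres : ∀ v : ι × Fin 2 → ℝ, ∑ o, M.mulVec v o = ∑ i, v i := by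
    intro v
    simp only [Matrix.mulVec, dotProduct]
    rw [Finset.sum_comm]
    simp only [← Finset.sum_mul, hM.2, one_mul]
  have hsum1 : ∑ x : ι × Fin 2, tens p groundBit x = 1 := by
    simp only [Fintype.sum_prod_type, tens, groundBit]
    simp [Finset.sum_mul, hp.2]
  have houtnn : ∀ o, 0 ≤ M.mulVec (tens p groundBit) o := by
    intro o
    apply Finset.sum_nonneg; intro x _
    exact mul_nonneg (hM.1 _ _) (mul_nonneg (hp.1 _) (by by_cases hx : x.2 = 0 <;> simp [groundBit, hx]))
  have hb0b1 : (∑ j, M.mulVec (tens p groundBit) (j, 0)) + (∑ j, M.mulVec (tens p groundBit) (j, 1)) = 1 := by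
    rw [← hsum1, ← hsumpres (tens p groundBit), Fintype.sum_prod_type]
    rw [Finset.sum_add_distrib.symm]
    apply Finset.sum_congr rfl; intro j _; rw [fin2_sum]
  -- from battery condition: Σ Q p ≥ 1 - ε
  set b0 := ∑ j, M.mulVec (tens p groundBit) (j, 0) with hb0def
  set b1 := ∑ j, M.mulVec (tens p groundBit) (j, 1) with hb1def
  have hb0nn : 0 ≤ b0 := Finset.sum_nonneg fun j _ => houtnn _
  have hb1nn : 0 ≤ b1 := Finset.sum_nonneg fun j _ => houtnn _
  have hbat' : (1/2) * (|b0 - 0| + |b1 - 1|) ≤ ε := by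
    rw [fin2_sum] at hbat
    simpa [excitedBit] using hbat
  have hQp : 1 - ε ≤ ∑ i, Q i * p i := by
    rw [← hb1]
    rw [sub_zero, abs_of_nonneg hb0nn, abs_of_nonpos (by linarith)] at hbat'
    linarith
  -- value bound
  have hval : (∑ i, Q i * h i) * γ 0 ≤ γ 1 := by
    have hγfix : ∑ j, M.mulVec (tens h γ) (j, 1) = ∑ j, h j * γ 1 := by
      rw [hfix]; simp [tens, Fintype.sum_prod_type]  -- careful
    have lhs_eq : ∑ j, M.mulVec (tens h γ) (j, 1)
        = ∑ j, ∑ i, (M (j,1) (i,0) * (h i * γ 0) + M (j,1) (i,1) * (h i * γ 1)) := by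
      apply Finset.sum_congr rfl; intro j _
      simp only [Matrix.mulVec, dotProduct, Fintype.sum_prod_type]
      apply Finset.sum_congr rfl; intro i _
      rw [fin2_sum]; simp [tens]
    have hdrop : ∑ i, (Q i * h i) * γ 0 ≤ ∑ j, M.mulVec (tens h γ) (j, 1) := by
      rw [lhs_eq, Finset.sum_comm]
      apply Finset.sum_le_sum; intro i _
      have : ∑ j, (M (j,1) (i,0) * (h i * γ 0) + M (j,1) (i,1) * (h i * γ 1))
          = Q i * (h i * γ 0) + (∑ j, M (j,1) (i,1)) * (h i * γ 1) := by
        rw [Finset.sum_add_distrib, ← Finset.sum_mul, ← Finset.sum_mul]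
      rw [this]
      have : 0 ≤ (∑ j, M (j,1) (i,1)) * (h i * γ 1) :=
        mul_nonneg (Finset.sum_nonneg fun j _ => hM.1 _ _)
          (mul_nonneg (hh.1 _) (gibbs1_nonneg β W))
      linarith [mul_assoc (Q i) (h i) (γ 0)]
    rw [hγfix] at hdrop
    have heq : ∑ j, h j * γ 1 = γ 1 := by rw [← Finset.sum_mul, hh.2, one_mul]
    calc (∑ i, Q i * h i) * γ 0 = ∑ i, Q i * h i * γ 0 := by rw [Finset.sum_mul]
    _ ≤ ∑ j, h j * γ 1 := hdrop
    _ = γ 1 := heq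
  refine ⟨Q, hQ01, hQp, ?_⟩
  rw [hγ] at hval
  rw [gibbs1_eq β W] at hval
  exact (mul_le_mul_iff_of_pos_right (gibbs0_pos β W)).mp hval

/-- Achievability for extraction. -/
lemma extract_achieve {ι : Type*} [Fintype ι] {β : ℝ} (hβ : 0 < β) {h p : ι → ℝ}
    (hh : IsProbVec h) (hp : IsProbVec p) {ε : ℝ} (Q : ι → ℝ)
    (hQ01 : ∀ i, 0 ≤ Q i ∧ Q i ≤ 1) (hQp : 1 - ε ≤ ∑ i, Q i * p i)
    (hμpos : 0 < ∑ i, Q i * h i) (hμle : ∑ i, Q i * h i ≤ 1) :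
    ExtractableWork β h p ε (-Real.log (∑ i, Q i * h i) / β) := by
  classical
  set μ := ∑ i, Q i * h i with hμ
  set W := -Real.log μ / β with hWdef
  have hW : 0 ≤ W := by
    rw [hWdef]
    apply div_nonneg _ hβ.le
    simp only [neg_nonneg]
    exact Real.log_nonpos hμpos.le hμle
  have hEμ : Real.exp (-β * W) = μ := by
    rw [hWdef]
    rw [show -β * (-Real.log μ / β) = Real.log μ by field_simp]
    exact Real.exp_log hμpos
  set γ := gibbsBit β W with hγ
  have hγ1 : γ 1 = μ * γ 0 := by rw [hγ, gibbs1_eq, hEμ]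
  have hγ0pos : 0 < γ 0 := gibbs0_pos β W
  set M : Matrix (ι × Fin 2) (ι × Fin 2) ℝ := fun jl ik =>
    if ik.2 = 0 then
      (if jl.2 = 0 then (if jl.1 = ik.1 then 1 - Q ik.1 else 0) else Q ik.1 * h jl.1)
    else (if jl.2 = 0 then h jl.1 * Q jl.1 / μ else 0) with hMdef
  refine ⟨hW, M, ⟨?_, ?_⟩, ?_, ?_⟩
  · -- nonneg
    rintro ⟨i, k⟩ ⟨j, l⟩
    fin_cases k <;> fin_cases l <;>
      simp only [hMdef] <;>
      split_ifs <;>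
      first
        | linarith [(hQ01 j).1, (hQ01 j).2]
        | exact mul_nonneg (hQ01 j).1 (hh.1 i)
        | exact div_nonneg (mul_nonneg (hh.1 i) (hQ01 i).1) hμpos.le
        | norm_num
  · -- column sums
    rintro ⟨i, k⟩
    rw [Fintype.sum_prod_type]
    fin_cases k
    · show ∑ j : ι, ∑ l : Fin 2, M (j, l) (i, (0 : Fin 2)) = 1
      have hinner : ∀ j : ι, ∑ l : Fin 2, M (j, l) (i, (0 : Fin 2))
          = (if j = i then 1 - Q i else 0) + Q i * h j := by
        intro j; rw [fin2_sum]; simp [hMdef]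
      rw [Finset.sum_congr rfl fun j _ => hinner j, Finset.sum_add_distrib,
        Finset.sum_ite_eq' univ i (fun _ => 1 - Q i), ← Finset.mul_sum, hh.2]
      simp
    · show ∑ j : ι, ∑ l : Fin 2, M (j, l) (i, (1 : Fin 2)) = 1
      have hinner : ∀ j : ι, ∑ l : Fin 2, M (j, l) (i, (1 : Fin 2))
          = Q j * h j / μ := by
        intro j; rw [fin2_sum]; simp [hMdef]; ring
      rw [Finset.sum_congr rfl fun j _ => hinner j, ← Finset.sum_div, ← hμ]
      field_simp
  · -- fixed point
    funext ⟨j, l⟩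
    simp only [Matrix.mulVec, dotProduct, Fintype.sum_prod_type]
    fin_cases l
    · show ∑ x : ι, ∑ y : Fin 2, M (j, (0 : Fin 2)) (x, y) * tens h γ (x, y)
        = tens h γ (j, (0 : Fin 2))
      have : ∀ i : ι, ∑ k, M (j, 0) (i, k) * tens h γ (i, k)
          = (if j = i then (1 - Q i) * (h i * γ 0) else 0) + h j * Q j / μ * (h i * γ 1) := by
        intro i; rw [fin2_sum]; by_cases hji : j = i <;> simp [hMdef, tens, hji]
      rw [Finset.sum_congr rfl fun i _ => this i]
      rw [Finset.sum_add_distrib]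
      rw [Finset.sum_ite_eq univ j (fun i => (1 - Q i) * (h i * γ 0))]
      simp only [mem_univ, if_pos]
      have : ∑ i, h j * Q j / μ * (h i * γ 1) = h j * Q j / μ * γ 1 := by
        rw [← Finset.mul_sum, ← Finset.sum_mul, hh.2, one_mul]
      rw [this, hγ1]
      show (1 - Q j) * (h j * γ 0) + h j * Q j / μ * (μ * γ 0) = tens h γ (j, 0)
      have : h j * Q j / μ * (μ * γ 0) = h j * Q j * γ 0 := by field_simp
      rw [this]
      simp [tens]; ring
    · show ∑ x : ι, ∑ y : Fin 2, M (j, (1 : Fin 2)) (x, y) * tens h γ (x, y)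
        = tens h γ (j, (1 : Fin 2))
      have : ∀ i : ι, ∑ k, M (j, 1) (i, k) * tens h γ (i, k)
          = Q i * h j * (h i * γ 0) := by
        intro i; rw [fin2_sum]; simp [hMdef, tens]
      rw [Finset.sum_congr rfl fun i _ => this i]
      have : ∑ i, Q i * h j * (h i * γ 0) = (∑ i, Q i * h i) * (h j * γ 0) := by
        rw [Finset.sum_mul]
        apply Finset.sum_congr rfl; intro i _; ring
      rw [this, ← hμ]
      show μ * (h j * γ 0) = tens h γ (j, 1)
      simp [tens, hγ1]; ring
  · -- battery condition
    set σ := ∑ i, Q i * p i with hσ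
    have hσ1 : σ ≤ 1 := by
      rw [hσ, ← hp.2]
      apply Finset.sum_le_sum
      intro i _
      calc Q i * p i ≤ 1 * p i := mul_le_mul_of_nonneg_right (hQ01 i).2 (hp.1 i)
      _ = p i := one_mul _
    have hb0 : ∀ j : ι, M.mulVec (tens p groundBit) (j, 0) = (1 - Q j) * p j := by
      intro j
      simp only [Matrix.mulVec, dotProduct, Fintype.sum_prod_type]
      have : ∀ i : ι, ∑ k, M (j, 0) (i, k) * tens p groundBit (i, k)
          = (if j = i then (1 - Q i) * p i else 0) := by
        intro i; rw [fin2_sum]; by_cases hji : j = i <;> simp [hMdef, tens, groundBit, hji]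
      rw [Finset.sum_congr rfl fun i _ => this i]
      rw [Finset.sum_ite_eq univ j (fun i => (1 - Q i) * p i)]
      simp
    have hb1 : ∀ j : ι, M.mulVec (tens p groundBit) (j, 1) = h j * σ := by
      intro j
      simp only [Matrix.mulVec, dotProduct, Fintype.sum_prod_type]
      have : ∀ i : ι, ∑ k, M (j, 1) (i, k) * tens p groundBit (i, k)
          = Q i * h j * p i := by
        intro i; rw [fin2_sum]; simp [hMdef, tens, groundBit]
      rw [Finset.sum_congr rfl fun i _ => this i]
      rw [hσ, Finset.mul_sum]
      apply Finset.sum_congr rfl; intro i _; ring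
    rw [fin2_sum]
    have e0 : ∑ i, M.mulVec (tens p groundBit) (i, 0) = 1 - σ := by
      rw [Finset.sum_congr rfl fun j _ => hb0 j]
      simp only [sub_mul, one_mul]
      rw [Finset.sum_sub_distrib, hp.2, hσ]
    have e1 : ∑ i, M.mulVec (tens p groundBit) (i, 1) = σ := by
      rw [Finset.sum_congr rfl fun j _ => hb1 j]
      rw [← Finset.sum_mul, hh.2, one_mul]
    rw [e0, e1]
    have : excitedBit 0 = 0 := rfl
    rw [this]
    have : excitedBit 1 = 1 := rfl
    rw [this]
    rw [sub_zero, abs_of_nonneg (by linarith), abs_of_nonpos (by linarith)]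
    linarith

/-- Converse for formation. -/
lemma form_converse {ι : Type*} [Fintype ι] {β : ℝ} {h p : ι → ℝ}
    (hh : IsProbVec h) {ε W : ℝ} (hF : FormationWork β h p ε W) :
    ∃ rt : ι → ℝ, IsProbVec rt ∧ (1/2) * ∑ i, |rt i - p i| ≤ ε ∧
      ∀ i, rt i ≤ Real.exp (β * W) * h i := by
  obtain ⟨hW, M, rt, hM, hfix, hrt, htv, hcreate⟩ := hF
  refine ⟨rt, hrt, htv, fun i => ?_⟩
  set γ := gibbsBit β W with hγ
  have hγ1 : γ 1 = Real.exp (-β * W) * γ 0 := gibbs1_eq β W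
  have hγ0pos : 0 < γ 0 := gibbs0_pos β W
  have hγ1pos : 0 < γ 1 := by rw [hγ1]; positivity
  -- rt i = ∑_j M (i,0) (j,1) * h j
  have hrti : rt i = ∑ j, M (i, 0) (j, 1) * h j := by
    have := congrFun hcreate (i, 0)
    rw [show tens rt groundBit (i, 0) = rt i by simp [tens, groundBit]] at this
    rw [← this]
    simp only [Matrix.mulVec, dotProduct, Fintype.sum_prod_type]
    apply Finset.sum_congr rfl; intro j _
    rw [fin2_sum]
    simp [tens, excitedBit, mul_comm]
  have hfixi : h i * γ 0 = ∑ j, (M (i, 0) (j, 0) * (h j * γ 0) + M (i, 0) (j, 1) * (h j * γ 1)) := by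
    have := congrFun hfix (i, 0)
    rw [show tens h γ (i, 0) = h i * γ 0 by simp [tens]] at this
    rw [← this]
    simp only [Matrix.mulVec, dotProduct, Fintype.sum_prod_type]
    apply Finset.sum_congr rfl; intro j _
    rw [fin2_sum]
    simp [tens]
  have hdrop : (∑ j, M (i, 0) (j, 1) * h j) * γ 1 ≤ h i * γ 0 := by
    rw [hfixi, Finset.sum_mul]
    apply Finset.sum_le_sum
    intro j _
    have h1 : 0 ≤ M (i, 0) (j, 0) * (h j * γ 0) :=
      mul_nonneg (hM.1 _ _) (mul_nonneg (hh.1 _) hγ0pos.le)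
    have : M (i, 0) (j, 1) * h j * γ 1 = M (i, 0) (j, 1) * (h j * γ 1) := by ring
    linarith [this.le]
  rw [← hrti, hγ1] at hdrop
  have hexp : Real.exp (β * W) * Real.exp (-β * W) = 1 := by
    rw [← Real.exp_add]; norm_num
  have hdrop' : rt i * Real.exp (-β * W) ≤ h i := by
    have h2 : rt i * (Real.exp (-β * W) * γ 0) = (rt i * Real.exp (-β * W)) * γ 0 := by ring
    rw [h2] at hdrop
    exact (mul_le_mul_iff_of_pos_right hγ0pos).mp hdrop
  have := mul_le_mul_of_nonneg_left hdrop' (Real.exp (β * W)).exp_nonneg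
  calc rt i = Real.exp (β * W) * (rt i * Real.exp (-β * W)) := by
        rw [show Real.exp (β * W) * (rt i * Real.exp (-β * W))
          = (Real.exp (β * W) * Real.exp (-β * W)) * rt i by ring, hexp, one_mul]
  _ ≤ Real.exp (β * W) * h i :=
      mul_le_mul_of_nonneg_left hdrop' (Real.exp_pos (β * W)).le

/-- Achievability for formation. -/
lemma form_achieve {ι : Type*} [Fintype ι] {β : ℝ} {h p : ι → ℝ}
    (hh : IsProbVec h) {ε W : ℝ} (hW : 0 ≤ W) (rt : ι → ℝ) (hrt : IsProbVec rt)
    (htv : (1/2) * ∑ i, |rt i - p i| ≤ ε)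
    (hdom : ∀ i, rt i ≤ Real.exp (β * W) * h i) :
    FormationWork β h p ε W := by
  classical
  set E := Real.exp (-β * W) with hE
  have hEpos : 0 < E := Real.exp_pos _
  have hEW : Real.exp (β * W) * E = 1 := by rw [hE, ← Real.exp_add]; norm_num
  have hdom' : ∀ i, E * rt i ≤ h i := by
    intro i
    have := mul_le_mul_of_nonneg_left (hdom i) hEpos.le
    calc E * rt i ≤ E * (Real.exp (β * W) * h i) := this
    _ = (Real.exp (β * W) * E) * h i := by ring
    _ = h i := by rw [hEW, one_mul]
  set γ := gibbsBit β W with hγ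
  have hγ1 : γ 1 = E * γ 0 := gibbs1_eq β W
  have hγ0pos : 0 < γ 0 := gibbs0_pos β W
  set M : Matrix (ι × Fin 2) (ι × Fin 2) ℝ := fun ik jl =>
    if jl.2 = 0 then (if ik.2 = 0 then h ik.1 - E * rt ik.1 else E * h ik.1)
    else (if ik.2 = 0 then rt ik.1 else 0) with hMdef
  refine ⟨hW, M, rt, ⟨?_, ?_⟩, ?_, hrt, htv, ?_⟩
  · rintro ⟨i, k⟩ ⟨j, l⟩
    fin_cases k <;> fin_cases l <;> simp only [hMdef] <;> norm_num <;>
      first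
        | linarith [hdom' i]
        | exact mul_nonneg hEpos.le (hh.1 i)
        | exact hrt.1 i
  · rintro ⟨j, l⟩
    rw [Fintype.sum_prod_type]
    fin_cases l
    · show ∑ i : ι, ∑ k : Fin 2, M (i, k) (j, (0 : Fin 2)) = 1
      have hinner : ∀ i : ι, ∑ k : Fin 2, M (i, k) (j, (0 : Fin 2))
          = (h i - E * rt i) + E * h i := by
        intro i; rw [fin2_sum]; simp [hMdef]
      rw [Finset.sum_congr rfl fun i _ => hinner i, Finset.sum_add_distrib,
        Finset.sum_sub_distrib, ← Finset.mul_sum, ← Finset.mul_sum, hh.2, hrt.2]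
      ring
    · show ∑ i : ι, ∑ k : Fin 2, M (i, k) (j, (1 : Fin 2)) = 1
      have hinner : ∀ i : ι, ∑ k : Fin 2, M (i, k) (j, (1 : Fin 2)) = rt i := by
        intro i; rw [fin2_sum]; simp [hMdef]
      rw [Finset.sum_congr rfl fun i _ => hinner i, hrt.2]
  · funext ⟨i, k⟩
    simp only [Matrix.mulVec, dotProduct, Fintype.sum_prod_type]
    fin_cases k
    · show ∑ x : ι, ∑ y : Fin 2, M (i, (0 : Fin 2)) (x, y) * tens h γ (x, y)
        = tens h γ (i, (0 : Fin 2))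
      have hinner : ∀ j : ι, ∑ y : Fin 2, M (i, (0 : Fin 2)) (j, y) * tens h γ (j, y)
          = (h i - E * rt i) * (h j * γ 0) + rt i * (h j * γ 1) := by
        intro j; rw [fin2_sum]; simp [hMdef, tens]
      rw [Finset.sum_congr rfl fun j _ => hinner j, Finset.sum_add_distrib,
        ← Finset.mul_sum, ← Finset.mul_sum, ← Finset.sum_mul, ← Finset.sum_mul, hh.2]
      show (h i - E * rt i) * (1 * γ 0) + rt i * (1 * γ 1) = tens h γ (i, 0)
      rw [hγ1]
      simp [tens]; ring
    · show ∑ x : ι, ∑ y : Fin 2, M (i, (1 : Fin 2)) (x, y) * tens h γ (x, y)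
        = tens h γ (i, (1 : Fin 2))
      have hinner : ∀ j : ι, ∑ y : Fin 2, M (i, (1 : Fin 2)) (j, y) * tens h γ (j, y)
          = E * h i * (h j * γ 0) := by
        intro j; rw [fin2_sum]; simp [hMdef, tens]
      rw [Finset.sum_congr rfl fun j _ => hinner j, ← Finset.mul_sum, ← Finset.sum_mul, hh.2]
      show E * h i * (1 * γ 0) = tens h γ (i, 1)
      rw [one_mul]
      simp [tens, hγ1]; ring
  · funext ⟨i, k⟩
    simp only [Matrix.mulVec, dotProduct, Fintype.sum_prod_type]
    fin_cases k
    · show ∑ x : ι, ∑ y : Fin 2, M (i, (0 : Fin 2)) (x, y) * tens h excitedBit (x, y)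
        = tens rt groundBit (i, (0 : Fin 2))
      have hinner : ∀ j : ι, ∑ y : Fin 2, M (i, (0 : Fin 2)) (j, y) * tens h excitedBit (j, y)
          = rt i * h j := by
        intro j; rw [fin2_sum]; simp [hMdef, tens, excitedBit]
      rw [Finset.sum_congr rfl fun j _ => hinner j, ← Finset.mul_sum, hh.2]
      simp [tens, groundBit]
    · show ∑ x : ι, ∑ y : Fin 2, M (i, (1 : Fin 2)) (x, y) * tens h excitedBit (x, y)
        = tens rt groundBit (i, (1 : Fin 2))
      have hinner : ∀ j : ι, ∑ y : Fin 2, M (i, (1 : Fin 2)) (j, y) * tens h excitedBit (j, y)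
          = 0 := by
        intro j; rw [fin2_sum]; simp [hMdef, tens, excitedBit]
      rw [Finset.sum_congr rfl fun j _ => hinner j]
      simp [tens, groundBit]

section Typ
variable {d : ℕ} (r g : Fin d → ℝ)

noncomputable def llr : Fin d → ℝ := fun i => Real.log (r i) - Real.log (g i)

noncomputable def llrS (n : ℕ) : (Fin n → Fin d) → ℝ := fun x => ∑ k, llr r g (x k)

noncomputable def varD : ℝ := ∑ i, r i * (llr r g i - relEnt r g) ^ 2

noncomputable def typSet (n : ℕ) (δ : ℝ) : Finset (Fin n → Fin d) :=
  Finset.univ.filter (fun x => 0 < tensPow r n x ∧ |llrS r g n x - n * relEnt r g| ≤ n * δ)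

lemma varD_nonneg (hr : ∀ i, 0 ≤ r i) : 0 ≤ varD r g :=
  Finset.sum_nonneg fun i _ => mul_nonneg (hr i) (sq_nonneg _)

lemma secondMoment (hr : IsProbVec r) (n : ℕ) :
    ∑ x : Fin n → Fin d, tensPow r n x * (llrS r g n x - n * relEnt r g) ^ 2
      = n * varD r g := by
  classical
  set D := relEnt r g with hD
  set f0 : Fin d → ℝ := fun i => llr r g i - D with hf0
  have hmean : ∑ i, r i * f0 i = 0 := by
    rw [hf0]
    simp only [mul_sub]
    rw [Finset.sum_sub_distrib, ← Finset.sum_mul, hr.2, one_mul]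
    rw [show ∑ i, r i * llr r g i = D from rfl]
    ring
  have hcenter : ∀ x : Fin n → Fin d, llrS r g n x - n * D = ∑ k, f0 (x k) := by
    intro x
    rw [hf0]
    simp only [llrS]
    rw [Finset.sum_sub_distrib, Finset.sum_const, card_univ, Fintype.card_fin, nsmul_eq_mul]
  have key : ∀ k l : Fin n, ∑ x : Fin n → Fin d, tensPow r n x * (f0 (x k) * f0 (x l))
      = if k = l then varD r g else 0 := by
    intro k l
    have hprod : ∀ x : Fin n → Fin d, tensPow r n x * (f0 (x k) * f0 (x l))
        = ∏ j, (r (x j) * ((if k = j then f0 (x j) else 1) * (if l = j then f0 (x j) else 1))) := by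
      intro x
      rw [Finset.prod_mul_distrib, Finset.prod_mul_distrib]
      rw [Finset.prod_ite_eq univ k (fun j => f0 (x j)),
        Finset.prod_ite_eq univ l (fun j => f0 (x j))]
      simp [tensPow]
    rw [Finset.sum_congr rfl fun x _ => hprod x,
      sum_pi_prod (fun j i => r i * ((if k = j then f0 i else 1) * (if l = j then f0 i else 1)))]
    by_cases hkl : k = l
    · subst hkl
      rw [if_pos rfl]
      have hfac : ∀ j, ∑ i, (r i * ((if k = j then f0 i else 1) * (if k = j then f0 i else 1)))
          = if k = j then varD r g else 1 := by
        intro j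
        by_cases hj : k = j
        · simp only [if_pos hj]
          rw [varD]
          apply Finset.sum_congr rfl; intro i _; rw [hf0]; ring
        · simp only [if_neg hj, mul_one]; exact hr.2
      rw [Finset.prod_congr rfl fun j _ => hfac j,
        Finset.prod_ite_eq univ k (fun _ => varD r g)]
      simp
    · rw [if_neg hkl]
      apply Finset.prod_eq_zero (Finset.mem_univ k)
      have hlk : ¬ l = k := fun hc => hkl hc.symm
      simp only [if_pos rfl, if_neg hlk, mul_one]
      exact hmean
  calc ∑ x : Fin n → Fin d, tensPow r n x * (llrS r g n x - n * D) ^ 2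
      = ∑ x : Fin n → Fin d, ∑ k : Fin n, ∑ l : Fin n,
          tensPow r n x * (f0 (x k) * f0 (x l)) := by
        apply Finset.sum_congr rfl; intro x _
        rw [hcenter x, sq, Finset.sum_mul_sum, Finset.mul_sum]
        apply Finset.sum_congr rfl; intro k _
        rw [Finset.mul_sum]
  _ = ∑ k : Fin n, ∑ l : Fin n, ∑ x : Fin n → Fin d,
        tensPow r n x * (f0 (x k) * f0 (x l)) := by
      rw [Finset.sum_comm]
      apply Finset.sum_congr rfl; intro k _
      rw [Finset.sum_comm]
  _ = ∑ k : Fin n, ∑ l : Fin n, if k = l then varD r g else 0 := by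
      apply Finset.sum_congr rfl; intro k _
      apply Finset.sum_congr rfl; intro l _
      exact key k l
  _ = n * varD r g := by
      simp only [Finset.sum_ite_eq univ, mem_univ, if_pos]
      rw [Finset.sum_const, card_univ, Fintype.card_fin, nsmul_eq_mul]

lemma typSet_mass (hr : IsProbVec r) {n : ℕ} (hn : 0 < n) {δ : ℝ} (hδ : 0 < δ) :
    1 - varD r g / (n * δ ^ 2) ≤ ∑ x ∈ typSet r g n δ, tensPow r n x := by
  classical
  have hsum1 : ∑ x : Fin n → Fin d, tensPow r n x = 1 := by
    show ∑ x : Fin n → Fin d, ∏ k, r (x k) = 1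
    rw [sum_pi_prod (fun _ i => r i)]
    simp [hr.2]
  have hsplit : ∑ x ∈ typSet r g n δ, tensPow r n x
      + ∑ x ∈ (typSet r g n δ)ᶜ, tensPow r n x = 1 := by
    rw [Finset.sum_add_sum_compl, hsum1]
  have hpoint : ∀ x ∈ (typSet r g n δ)ᶜ, tensPow r n x
      ≤ tensPow r n x * (llrS r g n x - n * relEnt r g) ^ 2 / (n * δ) ^ 2 := by
    intro x hx
    rw [Finset.mem_compl, typSet, Finset.mem_filter] at hx
    push_neg at hx
    have hnn : 0 ≤ tensPow r n x := Finset.prod_nonneg fun k _ => hr.1 _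
    rcases lt_or_eq_of_le hnn with hpos | hzero
    · have habs : n * δ < |llrS r g n x - n * relEnt r g| := by
        exact hx (Finset.mem_univ x) hpos
      have hnd : (0:ℝ) < n * δ := by positivity
      have hsq : (n * δ) ^ 2 ≤ (llrS r g n x - n * relEnt r g) ^ 2 := by
        rw [← sq_abs (llrS r g n x - n * relEnt r g)]
        exact pow_le_pow_left₀ hnd.le habs.le 2
      rw [le_div_iff₀ (by positivity)]
      calc tensPow r n x * (n * δ) ^ 2
          ≤ tensPow r n x * (llrS r g n x - n * relEnt r g) ^ 2 :=
            mul_le_mul_of_nonneg_left hsq hnn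
      _ = _ := rfl
    · rw [← hzero]
      positivity
  have hcompl : ∑ x ∈ (typSet r g n δ)ᶜ, tensPow r n x ≤ varD r g / (n * δ ^ 2) := by
    calc ∑ x ∈ (typSet r g n δ)ᶜ, tensPow r n x
        ≤ ∑ x ∈ (typSet r g n δ)ᶜ, tensPow r n x * (llrS r g n x - n * relEnt r g) ^ 2 / (n * δ) ^ 2 :=
          Finset.sum_le_sum hpoint
    _ ≤ ∑ x : Fin n → Fin d, tensPow r n x * (llrS r g n x - n * relEnt r g) ^ 2 / (n * δ) ^ 2 := by
        apply Finset.sum_le_sum_of_subset_of_nonneg (Finset.subset_univ _)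
        intro x _ _
        have hnn : 0 ≤ tensPow r n x := Finset.prod_nonneg fun k _ => hr.1 _
        positivity
    _ = (n * varD r g) / (n * δ) ^ 2 := by
        rw [← Finset.sum_div, secondMoment r g hr n]
    _ = varD r g / (n * δ ^ 2) := by
        field_simp
  linarith
end Typ

section Typ2
variable {d : ℕ} (r g : Fin d → ℝ)

lemma typSet_mem {n : ℕ} {δ : ℝ} {x : Fin n → Fin d} (hx : x ∈ typSet r g n δ) :
    0 < tensPow r n x ∧ |llrS r g n x - n * relEnt r g| ≤ n * δ := by
  rw [typSet, Finset.mem_filter] at hx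
  exact hx.2

lemma typ_ratio (hr : ∀ i, 0 ≤ r i) (hgpos : ∀ i, 0 < g i) {n : ℕ} {δ : ℝ}
    {x : Fin n → Fin d} (hx : x ∈ typSet r g n δ) :
    tensPow r n x ≤ Real.exp (n * (relEnt r g + δ)) * tensPow g n x ∧
    Real.exp (n * (relEnt r g - δ)) * tensPow g n x ≤ tensPow r n x := by
  obtain ⟨hpos, habs⟩ := typSet_mem r g hx
  have hrk : ∀ k, 0 < r (x k) := by
    intro k
    rcases lt_or_eq_of_le (hr (x k)) with h | h
    · exact h
    · exfalso
      have : tensPow r n x = 0 := Finset.prod_eq_zero (Finset.mem_univ k) h.symm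
      rw [this] at hpos; exact lt_irrefl 0 hpos
  have hgn : 0 < tensPow g n x := Finset.prod_pos fun k _ => hgpos _
  have hlogr : Real.log (tensPow r n x) = ∑ k, Real.log (r (x k)) :=
    Real.log_prod (fun k _ => (hrk k).ne')
  have hlogg : Real.log (tensPow g n x) = ∑ k, Real.log (g (x k)) :=
    Real.log_prod (fun k _ => (hgpos (x k)).ne')
  have hS : llrS r g n x = Real.log (tensPow r n x) - Real.log (tensPow g n x) := by
    rw [hlogr, hlogg, ← Finset.sum_sub_distrib]
    rfl
  have hRx : tensPow r n x = Real.exp (llrS r g n x) * tensPow g n x := by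
    rw [hS]
    rw [Real.exp_sub, Real.exp_log hpos, Real.exp_log hgn]
    field_simp
  have h1 : llrS r g n x ≤ n * (relEnt r g + δ) := by
    have := abs_le.mp habs
    nlinarith [this.2]
  have h2 : n * (relEnt r g - δ) ≤ llrS r g n x := by
    have := abs_le.mp habs
    nlinarith [this.1]
  constructor
  · rw [hRx]
    exact mul_le_mul_of_nonneg_right (Real.exp_le_exp.mpr h1) hgn.le
  · rw [hRx]
    exact mul_le_mul_of_nonneg_right (Real.exp_le_exp.mpr h2) hgn.le

lemma typSet_gmass (hr : IsProbVec r) (hgpos : ∀ i, 0 < g i) {n : ℕ} {δ : ℝ} :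
    ∑ x ∈ typSet r g n δ, tensPow g n x ≤ Real.exp (-(n * (relEnt r g - δ))) := by
  have hpt : ∀ x ∈ typSet r g n δ, tensPow g n x
      ≤ Real.exp (-(n * (relEnt r g - δ))) * tensPow r n x := by
    intro x hx
    have h2 := (typ_ratio r g hr.1 hgpos hx).2
    have hgn : (0:ℝ) < tensPow g n x := Finset.prod_pos fun k _ => hgpos _
    have hepos : (0:ℝ) < Real.exp (n * (relEnt r g - δ)) := Real.exp_pos _
    rw [Real.exp_neg]
    rw [← mul_le_mul_iff_of_pos_left hepos]
    calc Real.exp (n * (relEnt r g - δ)) * tensPow g n x ≤ tensPow r n x := h2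
    _ = Real.exp (n * (relEnt r g - δ)) * ((Real.exp (n * (relEnt r g - δ)))⁻¹ * tensPow r n x) := by
        rw [← mul_assoc, mul_inv_cancel₀ hepos.ne', one_mul]
  calc ∑ x ∈ typSet r g n δ, tensPow g n x
      ≤ ∑ x ∈ typSet r g n δ, Real.exp (-(n * (relEnt r g - δ))) * tensPow r n x :=
        Finset.sum_le_sum hpt
  _ = Real.exp (-(n * (relEnt r g - δ))) * ∑ x ∈ typSet r g n δ, tensPow r n x := by
      rw [Finset.mul_sum]
  _ ≤ Real.exp (-(n * (relEnt r g - δ))) * 1 := by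
      apply mul_le_mul_of_nonneg_left _ (Real.exp_pos _).le
      have hsum1 : ∑ x : Fin n → Fin d, tensPow r n x = 1 := by
        show ∑ x : Fin n → Fin d, ∏ k, r (x k) = 1
        rw [sum_pi_prod (fun _ i => r i)]
        simp [hr.2]
      rw [← hsum1]
      apply Finset.sum_le_sum_of_subset_of_nonneg (Finset.subset_univ _)
      intro x _ _
      exact Finset.prod_nonneg fun k _ => hr.1 _
  _ = Real.exp (-(n * (relEnt r g - δ))) := mul_one _
end Typ2

-- ===== per-n bounds =====
section Bounds
variable {d : ℕ} {β : ℝ} {g r : Fin d → ℝ} {ε : ℝ}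

/-- The correction constant. -/
noncomputable def corrC (ε : ℝ) : ℝ := -Real.log ((1 - ε) / 2)

lemma corrC_nonneg (hε : ε ∈ Set.Ioo (0:ℝ) 1) : 0 ≤ corrC ε := by
  rw [corrC, neg_nonneg]
  apply Real.log_nonpos (by linarith [hε.1, hε.2] : (0:ℝ) ≤ (1 - ε)/2)
  linarith [hε.1]

lemma gain_bound_n (hβ : 0 < β) (hg : IsProbVec g) (hgpos : ∀ i, 0 < g i)
    (hr : IsProbVec r) (hε : ε ∈ Set.Ioo (0:ℝ) 1) {δ : ℝ} (hδ : 0 < δ)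
    {n : ℕ} (hn : 1 ≤ n) (hν1 : varD r g / (n * δ ^ 2) ≤ ε)
    (hν2 : varD r g / (n * δ ^ 2) ≤ (1 - ε) / 2) :
    (n : ℝ) * (relEnt r g - δ) - corrC ε ≤ β * Wgain β (tensPow g n) (tensPow r n) ε ∧
    β * Wgain β (tensPow g n) (tensPow r n) ε ≤ (n : ℝ) * (relEnt r g + δ) + corrC ε := by
  classical
  obtain ⟨hε0, hε1⟩ := hε
  set Dr := relEnt r g with hDr
  set ν := varD r g / (n * δ ^ 2) with hν
  set T := typSet r g n δ with hT
  set Rn := tensPow r n with hRn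
  set Gn := tensPow g n with hGn
  have hRnprob : IsProbVec Rn := tensPow_prob hr n
  have hGnprob : IsProbVec Gn := tensPow_prob hg n
  have hGnpos : ∀ x, 0 < Gn x := tensPow_pos hgpos n
  have hRT : 1 - ν ≤ ∑ x ∈ T, Rn x := typSet_mass r g hr (by omega) hδ
  have hRTsub : ∑ x ∈ T, Rn x ≤ 1 := by
    rw [← hRnprob.2]
    exact Finset.sum_le_sum_of_subset_of_nonneg (Finset.subset_univ _)
      (fun x _ _ => hRnprob.1 x)
  have hhalf : (0:ℝ) < (1 - ε) / 2 := by linarith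
  -- upper bound for every extractable W
  have hub : ∀ W, ExtractableWork β Gn Rn ε W → β * W ≤ (n : ℝ) * (Dr + δ) + corrC ε := by
    intro W hW
    obtain ⟨Q, hQ01, hQp, hQval⟩ := extract_converse hGnprob hRnprob hW
    have hpt : ∀ x ∈ T, Real.exp (-((n:ℝ) * (Dr + δ))) * (Q x * Rn x) ≤ Q x * Gn x := by
      intro x hx
      have h1 := (typ_ratio r g hr.1 hgpos hx).1
      have : Real.exp (-((n:ℝ) * (Dr + δ))) * Rn x ≤ Gn x := by
        rw [Real.exp_neg]
        rw [inv_mul_le_iff₀ (Real.exp_pos _)]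
        exact h1
      calc Real.exp (-((n:ℝ) * (Dr + δ))) * (Q x * Rn x)
          = Q x * (Real.exp (-((n:ℝ) * (Dr + δ))) * Rn x) := by ring
      _ ≤ Q x * Gn x := mul_le_mul_of_nonneg_left this (hQ01 x).1
    have hQRT : 1 - ε - ν ≤ ∑ x ∈ T, Q x * Rn x := by
      have hcsplit : ∑ x ∈ T, Q x * Rn x + ∑ x ∈ Tᶜ, Q x * Rn x = ∑ x, Q x * Rn x :=
        Finset.sum_add_sum_compl T _
      have hcompl : ∑ x ∈ Tᶜ, Q x * Rn x ≤ ∑ x ∈ Tᶜ, Rn x := by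
        apply Finset.sum_le_sum
        intro x _
        calc Q x * Rn x ≤ 1 * Rn x := mul_le_mul_of_nonneg_right (hQ01 x).2 (hRnprob.1 x)
        _ = Rn x := one_mul _
      have hcompl2 : ∑ x ∈ Tᶜ, Rn x ≤ ν := by
        have := Finset.sum_add_sum_compl T Rn
        rw [hRnprob.2] at this
        linarith
      linarith
    have hstein : Real.exp (-((n:ℝ) * (Dr + δ))) * ((1 - ε) / 2) ≤ ∑ x, Q x * Gn x := by
      have h1 : ∑ x ∈ T, Q x * Gn x ≤ ∑ x, Q x * Gn x := by
        apply Finset.sum_le_sum_of_subset_of_nonneg (Finset.subset_univ _)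
        intro x _ _
        exact mul_nonneg (hQ01 x).1 (hGnpos x).le
      have h2 : Real.exp (-((n:ℝ) * (Dr + δ))) * ∑ x ∈ T, Q x * Rn x
          ≤ ∑ x ∈ T, Q x * Gn x := by
        rw [Finset.mul_sum]
        exact Finset.sum_le_sum hpt
      have h3 : Real.exp (-((n:ℝ) * (Dr + δ))) * ((1 - ε) / 2)
          ≤ Real.exp (-((n:ℝ) * (Dr + δ))) * ∑ x ∈ T, Q x * Rn x := by
        apply mul_le_mul_of_nonneg_left _ (Real.exp_pos _).le
        linarith
      linarith
    have hfinal : Real.exp (-((n:ℝ) * (Dr + δ))) * ((1 - ε) / 2) ≤ Real.exp (-β * W) :=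
      le_trans hstein hQval
    have hlog := Real.log_le_log (by positivity) hfinal
    rw [Real.log_mul (Real.exp_pos _).ne' hhalf.ne', Real.log_exp, Real.log_exp] at hlog
    rw [corrC]
    linarith
  -- the explicit extractable W from the typical set
  have hTne : T.Nonempty := by
    by_contra hc
    rw [Finset.not_nonempty_iff_eq_empty] at hc
    rw [hc, Finset.sum_empty] at hRT
    have : ν ≤ (1 - ε)/2 := hν2
    linarith
  have hGT_pos : 0 < ∑ x ∈ T, Gn x := Finset.sum_pos (fun x _ => hGnpos x) hTne
  have hGT_le1 : ∑ x ∈ T, Gn x ≤ 1 := by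
    rw [← hGnprob.2]
    exact Finset.sum_le_sum_of_subset_of_nonneg (Finset.subset_univ _)
      (fun x _ _ => (hGnpos x).le)
  set Q0 : (Fin n → Fin d) → ℝ := fun x => if x ∈ T then 1 else 0 with hQ0
  have hQ0R : ∑ x, Q0 x * Rn x = ∑ x ∈ T, Rn x := by
    simp only [hQ0, ite_mul, one_mul, zero_mul]
    rw [Finset.sum_ite_mem, Finset.univ_inter]
  have hQ0G : ∑ x, Q0 x * Gn x = ∑ x ∈ T, Gn x := by
    simp only [hQ0, ite_mul, one_mul, zero_mul]
    rw [Finset.sum_ite_mem, Finset.univ_inter]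
  have hach : ExtractableWork β Gn Rn ε (-Real.log (∑ x, Q0 x * Gn x) / β) := by
    apply extract_achieve hβ hGnprob hRnprob Q0
    · intro x; by_cases hx : x ∈ T <;> simp [hQ0, hx]
    · rw [hQ0R]; linarith
    · rw [hQ0G]; exact hGT_pos
    · rw [hQ0G]; exact hGT_le1
  have hmem : (-Real.log (∑ x ∈ T, Gn x) / β) ∈ {W | ExtractableWork β Gn Rn ε W} := by
    rw [← hQ0G]; exact hach
  have hbddA : BddAbove {W | ExtractableWork β Gn Rn ε W} := by
    refine ⟨((n : ℝ) * (Dr + δ) + corrC ε) / β, fun W hW => ?_⟩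
    rw [le_div_iff₀ hβ, show W * β = β * W from mul_comm W β]
    exact hub W hW
  have hWstar : (n : ℝ) * (Dr - δ) ≤ β * (-Real.log (∑ x ∈ T, Gn x) / β) := by
    rw [show β * (-Real.log (∑ x ∈ T, Gn x) / β) = -Real.log (∑ x ∈ T, Gn x) by
      field_simp]
    have hgm : ∑ x ∈ T, Gn x ≤ Real.exp (-((n:ℝ) * (Dr - δ))) := typSet_gmass r g hr hgpos
    have := Real.log_le_log hGT_pos hgm
    rw [Real.log_exp] at this
    linarith
  constructor
  · have h1 : (-Real.log (∑ x ∈ T, Gn x) / β) ≤ Wgain β Gn Rn ε := le_csSup hbddA hmem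
    have h2 := mul_le_mul_of_nonneg_left h1 hβ.le
    have h3 : (0:ℝ) ≤ corrC ε := corrC_nonneg ⟨hε0, hε1⟩
    linarith
  · have h1 : Wgain β Gn Rn ε ≤ ((n : ℝ) * (Dr + δ) + corrC ε) / β := by
      apply csSup_le ⟨_, hmem⟩
      intro W hW
      rw [le_div_iff₀ hβ, show W * β = β * W from mul_comm W β]
      exact hub W hW
    have h2 := mul_le_mul_of_nonneg_left h1 hβ.le
    rw [mul_div_cancel₀ _ hβ.ne'] at h2
    exact h2
  
lemma cost_bound_n (hβ : 0 < β) (hg : IsProbVec g) (hgpos : ∀ i, 0 < g i)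
    (hr : IsProbVec r) (hε : ε ∈ Set.Ioo (0:ℝ) 1) {δ : ℝ} (hδ : 0 < δ)
    {n : ℕ} (hn : 1 ≤ n) (hν1 : varD r g / (n * δ ^ 2) ≤ ε)
    (hν2 : varD r g / (n * δ ^ 2) ≤ (1 - ε) / 2) :
    (n : ℝ) * (relEnt r g - δ) - corrC ε ≤ β * Wcost β (tensPow g n) (tensPow r n) ε ∧
    β * Wcost β (tensPow g n) (tensPow r n) ε ≤ (n : ℝ) * (relEnt r g + δ) + corrC ε := by
  classical
  obtain ⟨hε0, hε1⟩ := hε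
  set Dr := relEnt r g with hDr
  set ν := varD r g / (n * δ ^ 2) with hν
  set T := typSet r g n δ with hT
  set Rn := tensPow r n with hRn
  set Gn := tensPow g n with hGn
  have hRnprob : IsProbVec Rn := tensPow_prob hr n
  have hGnprob : IsProbVec Gn := tensPow_prob hg n
  have hGnpos : ∀ x, 0 < Gn x := tensPow_pos hgpos n
  have hD0 : 0 ≤ Dr := relEnt_nonneg hr hg hgpos
  have hRT : 1 - ν ≤ ∑ x ∈ T, Rn x := typSet_mass r g hr (by omega) hδ
  have hRTsub : ∑ x ∈ T, Rn x ≤ 1 := by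
    rw [← hRnprob.2]
    exact Finset.sum_le_sum_of_subset_of_nonneg (Finset.subset_univ _)
      (fun x _ _ => hRnprob.1 x)
  have hhalf : (0:ℝ) < (1 - ε) / 2 := by linarith
  set S := ∑ x ∈ T, Rn x with hS
  have hSpos : 0 < S := by rw [hS]; linarith
  have hTne : T.Nonempty := by
    by_contra hc
    rw [Finset.not_nonempty_iff_eq_empty] at hc
    rw [hS, hc, Finset.sum_empty] at hSpos
    exact lt_irrefl 0 hSpos
  have hGT_pos : 0 < ∑ x ∈ T, Gn x := Finset.sum_pos (fun x _ => hGnpos x) hTne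
  -- explicit formation protocol
  set rt : (Fin n → Fin d) → ℝ := fun x => if x ∈ T then Rn x / S else 0 with hrt
  set Wstar := ((n:ℝ) * (Dr + δ) - Real.log S) / β with hWstar
  have hlogS : Real.log S ≤ 0 := Real.log_nonpos hSpos.le hRTsub
  have hWstar0 : 0 ≤ Wstar := by
    rw [hWstar]
    apply div_nonneg _ hβ.le
    have : (0:ℝ) ≤ (n:ℝ) * (Dr + δ) := by positivity
    linarith
  have hrtprob : IsProbVec rt := by
    constructor
    · intro x
      simp only [hrt]
      split_ifs
      · exact div_nonneg (hRnprob.1 x) hSpos.le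
      · exact le_refl 0
    · simp only [hrt]
      rw [Finset.sum_ite_mem, Finset.univ_inter, ← Finset.sum_div, ← hS]
      field_simp
  have htv : (1/2) * ∑ x, |rt x - Rn x| ≤ ε := by
    have hsplit : ∑ x, |rt x - Rn x| = ∑ x ∈ T, |rt x - Rn x| + ∑ x ∈ Tᶜ, |rt x - Rn x| :=
      (Finset.sum_add_sum_compl T _).symm
    have hTpart : ∑ x ∈ T, |rt x - Rn x| = 1 - S := by
      have hpt : ∀ x ∈ T, |rt x - Rn x| = Rn x / S - Rn x := by
        intro x hx
        simp only [hrt, if_pos hx]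
        apply abs_of_nonneg
        have h1 : Rn x * S ≤ Rn x * 1 := mul_le_mul_of_nonneg_left hRTsub (hRnprob.1 x)
        rw [mul_one] at h1
        rw [sub_nonneg, le_div_iff₀ hSpos]
        exact h1
      rw [Finset.sum_congr rfl hpt, Finset.sum_sub_distrib, ← Finset.sum_div, ← hS]
      field_simp
    have hCpart : ∑ x ∈ Tᶜ, |rt x - Rn x| = 1 - S := by
      have hpt : ∀ x ∈ Tᶜ, |rt x - Rn x| = Rn x := by
        intro x hx
        rw [Finset.mem_compl] at hx
        simp only [hrt, if_neg hx]
        rw [zero_sub, abs_neg, abs_of_nonneg (hRnprob.1 x)]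
      rw [Finset.sum_congr rfl hpt]
      have := Finset.sum_add_sum_compl T Rn
      rw [hRnprob.2] at this
      linarith
    rw [hsplit, hTpart, hCpart]
    have h1ms : 1 - S ≤ ν := by rw [hS]; linarith
    linarith
  have hexpW : Real.exp (β * Wstar) = Real.exp ((n:ℝ) * (Dr + δ)) / S := by
    rw [hWstar, show β * (((n:ℝ) * (Dr + δ) - Real.log S) / β) = (n:ℝ) * (Dr + δ) - Real.log S by
      field_simp, Real.exp_sub, Real.exp_log hSpos]
  have hdom : ∀ x, rt x ≤ Real.exp (β * Wstar) * Gn x := by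
    intro x
    simp only [hrt]
    rw [hexpW]
    split_ifs with hx
    · have h1 := (typ_ratio r g hr.1 hgpos hx).1
      rw [div_mul_eq_mul_div]
      exact (div_le_div_iff_of_pos_right hSpos).mpr h1
    · exact mul_nonneg (by positivity) (hGnpos x).le
  have hform : FormationWork β Gn Rn ε Wstar := form_achieve hGnprob hWstar0 rt hrtprob htv hdom
  have hbddB : BddBelow {W | FormationWork β Gn Rn ε W} := ⟨0, fun W hW => hW.1⟩
  -- lower bound for every formation W
  have hlb : ∀ W, FormationWork β Gn Rn ε W → (n : ℝ) * (Dr - δ) - corrC ε ≤ β * W := by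
    intro W hW
    obtain ⟨rt', hrt'prob, htv', hdom'⟩ := form_converse hGnprob hW
    have hrtT : (1 - ε) / 2 ≤ ∑ x ∈ T, rt' x := by
      have hev : ∑ x ∈ T, (Rn x - rt' x) ≤ (1/2) * ∑ x, |Rn x - rt' x| :=
        tv_event (by rw [hRnprob.2, hrt'prob.2]) T
      have habs : ∑ x, |Rn x - rt' x| = ∑ x, |rt' x - Rn x| := by
        apply Finset.sum_congr rfl; intro x _; rw [abs_sub_comm]
      rw [habs] at hev
      rw [Finset.sum_sub_distrib] at hev
      have : 1 - ν - ε ≤ ∑ x ∈ T, rt' x := by linarith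
      linarith
    have hup : ∑ x ∈ T, rt' x ≤ Real.exp (β * W) * Real.exp (-((n:ℝ) * (Dr - δ))) := by
      calc ∑ x ∈ T, rt' x ≤ ∑ x ∈ T, Real.exp (β * W) * Gn x :=
            Finset.sum_le_sum fun x _ => hdom' x
      _ = Real.exp (β * W) * ∑ x ∈ T, Gn x := by rw [Finset.mul_sum]
      _ ≤ Real.exp (β * W) * Real.exp (-((n:ℝ) * (Dr - δ))) :=
            mul_le_mul_of_nonneg_left (typSet_gmass r g hr hgpos) (Real.exp_pos _).le
    have hkey : (1 - ε) / 2 ≤ Real.exp (β * W - (n:ℝ) * (Dr - δ)) := by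
      rw [Real.exp_sub]
      calc (1 - ε)/2 ≤ Real.exp (β * W) * Real.exp (-((n:ℝ) * (Dr - δ))) :=
            le_trans hrtT hup
      _ = Real.exp (β * W) / Real.exp ((n:ℝ) * (Dr - δ)) := by
            rw [Real.exp_neg]; ring
    have hlog := Real.log_le_log hhalf hkey
    rw [Real.log_exp] at hlog
    rw [corrC]
    linarith
  constructor
  · have h1 : ((n : ℝ) * (Dr - δ) - corrC ε) / β ≤ Wcost β Gn Rn ε := by
      refine le_csInf ⟨Wstar, hform⟩ fun W hW => ?_
      rw [div_le_iff₀ hβ, show ((n:ℝ) * (Dr - δ) - corrC ε) = ((n:ℝ) * (Dr - δ) - corrC ε) from rfl]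
      have := hlb W hW
      linarith [mul_comm W β]
    have h2 := mul_le_mul_of_nonneg_left h1 hβ.le
    rw [mul_div_cancel₀ _ hβ.ne'] at h2
    exact h2
  · have h1 : Wcost β Gn Rn ε ≤ Wstar := csInf_le hbddB hform
    have h2 := mul_le_mul_of_nonneg_left h1 hβ.le
    have h3 : β * Wstar = (n:ℝ) * (Dr + δ) - Real.log S := by
      rw [hWstar]; field_simp
    have h4 : -Real.log S ≤ corrC ε := by
      rw [corrC, neg_le_neg_iff]
      apply Real.log_le_log hhalf
      rw [hS]; linarith
    linarith

end Bounds

-- ===== limit machinery =====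
lemma squeeze_aux {β : ℝ} (hβ : 0 < β) (D : ℝ) (x : ℕ → ℝ)
    (hx : ∀ δ : ℝ, 0 < δ → ∃ C : ℝ, 0 ≤ C ∧ ∀ᶠ n : ℕ in atTop,
      (n : ℝ) * (D - δ) - C ≤ β * x n ∧ β * x n ≤ (n : ℝ) * (D + δ) + C) :
    Tendsto (fun n : ℕ => (1 / (n : ℝ)) * x n) atTop (nhds ((1/β) * D)) := by
  rw [Metric.tendsto_atTop]
  intro η hη
  obtain ⟨C, hC, hev⟩ := hx (β * η / 4) (by positivity)
  obtain ⟨N₀, hN₀⟩ := eventually_atTop.mp hev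
  obtain ⟨N₁, hN₁⟩ := exists_nat_gt (2 * C / (β * η) + 1)
  refine ⟨max N₀ N₁, fun n hn => ?_⟩
  have hn0 : N₀ ≤ n := le_trans (le_max_left _ _) hn
  have hn1 : (N₁ : ℝ) ≤ (n : ℝ) := by exact_mod_cast le_trans (le_max_right _ _) hn
  have hCd : (0:ℝ) ≤ 2 * C / (β * η) := by positivity
  have hnpos : (0:ℝ) < n := by linarith
  obtain ⟨hL, hU⟩ := hN₀ n hn0
  rw [Real.dist_eq]
  have hkey : |β * x n - (n : ℝ) * D| ≤ (n : ℝ) * (β * η / 4) + C := by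
    rw [abs_le]
    constructor <;> linarith
  have heq : (1/(n:ℝ)) * x n - (1/β) * D = (β * x n - (n : ℝ) * D) / ((n : ℝ) * β) := by
    field_simp
  rw [heq, abs_div, abs_of_pos (by positivity : (0:ℝ) < (n:ℝ) * β)]
  rw [div_lt_iff₀ (by positivity : (0:ℝ) < (n:ℝ) * β)]
  have hβη : (0:ℝ) < β * η := by positivity
  have h3 : 2 * C / (β * η) < (n : ℝ) := by linarith
  have h4 : 2 * C < (n : ℝ) * (β * η) := by rwa [div_lt_iff₀ hβη] at h3
  calc |β * x n - (n : ℝ) * D| ≤ (n : ℝ) * (β * η / 4) + C := hkey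
  _ < (n : ℝ) * (β * η / 4) + (n : ℝ) * (β * η) / 2 := by linarith
  _ ≤ η * ((n : ℝ) * β) := by nlinarith

lemma eventually_cond {V : ℝ} (hV : 0 ≤ V) {δ ε : ℝ} (hδ : 0 < δ) (hε : ε ∈ Set.Ioo (0:ℝ) 1) :
    ∀ᶠ n : ℕ in atTop, 1 ≤ n ∧ V / ((n : ℝ) * δ ^ 2) ≤ ε ∧ V / ((n : ℝ) * δ ^ 2) ≤ (1 - ε) / 2 := by
  have hm : (0:ℝ) < min ε ((1 - ε)/2) := by
    apply lt_min hε.1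
    linarith [hε.2]
  have htend : Tendsto (fun n : ℕ => (V / δ ^ 2) / (n : ℝ)) atTop (nhds 0) :=
    tendsto_const_div_atTop_nhds_zero_nat _
  have hevsmall : ∀ᶠ n : ℕ in atTop, (V / δ ^ 2) / (n : ℝ) < min ε ((1 - ε)/2) :=
    htend.eventually (gt_mem_nhds hm)
  filter_upwards [hevsmall, eventually_ge_atTop 1] with n h1 h2
  have heq : V / ((n : ℝ) * δ ^ 2) = (V / δ ^ 2) / (n : ℝ) := by
    rw [div_div, mul_comm]
  refine ⟨h2, ?_, ?_⟩
  · rw [heq]; exact le_trans h1.le (min_le_left _ _)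
  · rw [heq]; exact le_trans h1.le (min_le_right _ _)

/-- in the asymptotic limit the one-shot work yield and work cost per copy
both converge to the free-energy difference `(1/β) D(r‖g)`. -/
theorem asymptotic_work_yield_and_cost {d : ℕ} (β : ℝ) (hβ : 0 < β)
    (g : Fin d → ℝ) (hg : IsProbVec g) (hgpos : ∀ i, 0 < g i)
    (r : Fin d → ℝ) (hr : IsProbVec r)
    (ε : ℝ) (hε : ε ∈ Set.Ioo (0 : ℝ) 1) :
    Tendsto (fun n : ℕ => (1 / (n : ℝ)) * Wgain β (tensPow g n) (tensPow r n) ε) atTop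
      (nhds ((1 / β) * relEnt r g)) ∧
    Tendsto (fun n : ℕ => (1 / (n : ℝ)) * Wcost β (tensPow g n) (tensPow r n) ε) atTop
      (nhds ((1 / β) * relEnt r g)) := by
  have hV : 0 ≤ varD r g := varD_nonneg r g hr.1
  constructor
  · apply squeeze_aux hβ (relEnt r g)
    intro δ hδ
    refine ⟨corrC ε, corrC_nonneg hε, ?_⟩
    filter_upwards [eventually_cond hV hδ hε] with n hn
    exact gain_bound_n hβ hg hgpos hr hε hδ hn.1 hn.2.1 hn.2.2
  · apply squeeze_aux hβ (relEnt r g)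
    intro δ hδ
    refine ⟨corrC ε, corrC_nonneg hε, ?_⟩
    filter_upwards [eventually_cond hV hδ hε] with n hn
    exact cost_bound_n hβ hg hgpos hr hε hδ hn.1 hn.2.1 hn.2.2
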